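/- Let m ≥ 1, let A_1, …, A_m, B ∈ ℱ be events, let 𝒢 and ℋ_1, …, ℋ_m be sub-σ-algebras of ℱ, σ ∈ (0,1] a constant, and f : Ω → ℝ a bounded 𝒢-measurable random variable. Set π_i := P[A_i | ℋ_i] and assume: (i) π_i ≥ σ almost surely for every i; (ii) for every i, 𝒢 ⊆ ℋ_i, the indicator 1_B is ℋ_i-measurable, and the indicators 1_{A_j} and conditional probabilities π_j for all j > i are ℋ_i-measurable. Then the recursive inverse probability weighted estimating function for the propensity of B is unbiased: E[∏_{i=1}^m (1_{A_i} / π_i) · f · (1_B − P[B | 𝒢])] = 0. -/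

import Mathlib

open MeasureTheory

lemma peel_one {Ω : Type*} [m0 : MeasurableSpace Ω]
    (μ : Measure Ω) [IsProbabilityMeasure μ]
    (h : MeasurableSpace Ω) (hle : h ≤ m0)
    (A : Set Ω) (hA : MeasurableSet[m0] A)
    (π : Ω → ℝ) (hπ : π = μ[A.indicator (fun _ => (1 : ℝ)) | h])
    (σ : ℝ) (hσ : 0 < σ) (hbd : ∀ᵐ ω ∂μ, σ ≤ π ω)
    (g : Ω → ℝ) (hg : Measurable[h] g) (D : ℝ) (hgbd : ∀ᵐ ω ∂μ, |g ω| ≤ D) :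
    ∫ ω, (A.indicator (fun _ => (1 : ℝ)) ω / π ω) * g ω ∂μ = ∫ ω, g ω ∂μ := by
  have hπh : Measurable[h] π := by rw [hπ]; exact stronglyMeasurable_condExp.measurable
  set q : Ω → ℝ := fun ω => g ω / π ω with hq
  have hqh : Measurable[h] q := hg.div hπh
  have hqm : Measurable[m0] q := hqh.mono hle le_rfl
  have hindm : Measurable[m0] (A.indicator (fun _ => (1 : ℝ))) :=
    measurable_const.indicator hA
  have hpt : ∀ ω, (A.indicator (fun _ => (1 : ℝ)) ω / π ω) * g ω
      = q ω * A.indicator (fun _ => (1 : ℝ)) ω := by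
    intro ω; simp only [hq]; ring
  have hbd2 : ∀ᵐ ω ∂μ, |q ω * A.indicator (fun _ => (1 : ℝ)) ω| ≤ |D| / σ := by
    filter_upwards [hbd, hgbd] with ω hπω hgω
    have hπpos : 0 < π ω := lt_of_lt_of_le hσ hπω
    rw [abs_mul]
    calc |q ω| * |A.indicator (fun _ => (1 : ℝ)) ω| ≤ |q ω| * 1 := by
          gcongr
          by_cases hω : ω ∈ A <;> simp [Set.indicator_apply, hω]
      _ = |g ω| / π ω := by
          rw [mul_one, hq]; simp [abs_div, abs_of_pos hπpos]
      _ ≤ |D| / σ := div_le_div₀ (abs_nonneg D) (hgω.trans (le_abs_self D)) hσ hπω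
  have hint : Integrable (fun ω => q ω * A.indicator (fun _ => (1 : ℝ)) ω) μ := by
    refine Integrable.mono' (integrable_const (|D| / σ)) ?_ hbd2
    exact (hqm.mul hindm).aestronglyMeasurable
  have hind_int : Integrable (A.indicator (fun _ => (1 : ℝ))) μ :=
    (integrable_const (1 : ℝ)).indicator hA
  have hpull : μ[(fun ω => q ω * A.indicator (fun _ => (1 : ℝ)) ω) | h]
      =ᵐ[μ] fun ω => q ω * (μ[A.indicator (fun _ => (1 : ℝ)) | h]) ω :=
    condExp_mul_of_stronglyMeasurable_left (hqh.stronglyMeasurable) hint hind_int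
  have hqπ : (fun ω => q ω * (μ[A.indicator (fun _ => (1 : ℝ)) | h]) ω) =ᵐ[μ] g := by
    filter_upwards [hbd] with ω hπω
    have hπne : π ω ≠ 0 := (lt_of_lt_of_le hσ hπω).ne'
    simp only [hq, ← hπ]
    exact div_mul_cancel₀ (g ω) hπne
  calc ∫ ω, (A.indicator (fun _ => (1 : ℝ)) ω / π ω) * g ω ∂μ
      = ∫ ω, q ω * A.indicator (fun _ => (1 : ℝ)) ω ∂μ :=
        integral_congr_ae (Filter.Eventually.of_forall hpt)
    _ = ∫ ω, (μ[(fun ω => q ω * A.indicator (fun _ => (1 : ℝ)) ω) | h]) ω ∂μ :=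
        (integral_condExp hle).symm
    _ = ∫ ω, g ω ∂μ := integral_congr_ae (hpull.trans hqπ)


/-- Unbiasedness of the recursive inverse probability weighted estimating
function for a propensity score:
`E[∏ᵢ (1_{Aᵢ} / πᵢ) · f · (1_B − P[B | 𝒢])] = 0`. -/
theorem stmt_10 {Ω : Type*} [m0 : MeasurableSpace Ω]
    (μ : Measure Ω) [IsProbabilityMeasure μ]
    (m : ℕ) (hm : 1 ≤ m)
    (A : Fin m → Set Ω) (hA : ∀ i, MeasurableSet (A i))
    (B : Set Ω) (hB : MeasurableSet B)
    (G : MeasurableSpace Ω) (hG : G ≤ m0)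
    (H : Fin m → MeasurableSpace Ω) (hH : ∀ i, H i ≤ m0)
    (σ : ℝ) (hσ0 : 0 < σ) (hσ1 : σ ≤ 1)
    (f : Ω → ℝ) (hfmeas : Measurable[G] f) (C : ℝ) (hfbd : ∀ ω, |f ω| ≤ C)
    (π : Fin m → Ω → ℝ)
    (hπ : ∀ i, π i = μ[(A i).indicator (fun _ => (1 : ℝ)) | H i])
    (hbound : ∀ i, ∀ᵐ ω ∂μ, σ ≤ π i ω)
    (hGH : ∀ i, G ≤ H i)
    (hBmeas : ∀ i, MeasurableSet[H i] B)
    (hAmeas : ∀ i j : Fin m, i < j → MeasurableSet[H i] (A j))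
    (hπmeas : ∀ i j : Fin m, i < j → Measurable[H i] (π j)) :
    ∫ ω, (∏ i : Fin m, (A i).indicator (fun _ => (1 : ℝ)) ω / π i ω)
        * (f ω * (B.indicator (fun _ => (1 : ℝ)) ω
            - (μ[B.indicator (fun _ => (1 : ℝ)) | G]) ω)) ∂μ
      = 0 := by
  classical
  set indB : Ω → ℝ := B.indicator (fun _ => (1 : ℝ)) with hindB
  set c : Ω → ℝ := μ[indB | G] with hc
  set g : Ω → ℝ := fun ω => f ω * (indB ω - c ω) with hg
  -- bounds
  have hindBbd : ∀ ω, |indB ω| ≤ 1 := by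
    intro ω; by_cases hω : ω ∈ B <;> simp [hindB, Set.indicator_apply, hω]
  have hcbd : ∀ᵐ ω ∂μ, |c ω| ≤ 1 := by
    have h1 : ∀ᵐ ω ∂μ, |indB ω| ≤ ((1 : NNReal) : ℝ) :=
      Filter.Eventually.of_forall (fun ω => by simpa using hindBbd ω)
    simpa [hc] using ae_bdd_condExp_of_ae_bdd (m := G) h1
  have hgbd : ∀ᵐ ω ∂μ, |g ω| ≤ |C| * 2 := by
    filter_upwards [hcbd] with ω hcω
    have h1 : |f ω| ≤ |C| := (hfbd ω).trans (le_abs_self C)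
    have h2 : |indB ω - c ω| ≤ 2 := by
      have := hindBbd ω
      calc |indB ω - c ω| ≤ |indB ω| + |c ω| := abs_sub _ _
        _ ≤ 2 := by linarith
    calc |g ω| = |f ω| * |indB ω - c ω| := abs_mul _ _
      _ ≤ |C| * 2 := mul_le_mul h1 h2 (abs_nonneg _) (abs_nonneg _)
  -- measurability of g w.r.t. each H i
  have hcmeasG : Measurable[G] c := by rw [hc]; exact stronglyMeasurable_condExp.measurable
  have hgmeasH : ∀ i, Measurable[H i] g := by
    intro i
    exact (hfmeas.mono (hGH i) le_rfl).mul
      (((measurable_const.indicator (hBmeas i)) :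
          Measurable[H i] indB).sub (hcmeasG.mono (hGH i) le_rfl))
  set W : Fin m → Ω → ℝ := fun i ω => (A i).indicator (fun _ => (1 : ℝ)) ω / π i ω with hW
  have hball : ∀ᵐ ω ∂μ, ∀ i, σ ≤ π i ω := (MeasureTheory.ae_all_iff).2 hbound
  have hinvσ : (1 : ℝ) ≤ 1 / σ := by rw [le_div_iff₀ hσ0]; linarith
  -- single W bound
  have hWbd : ∀ i ω, σ ≤ π i ω → |W i ω| ≤ 1 / σ := by
    intro i ω hπω
    have hπpos : 0 < π i ω := lt_of_lt_of_le hσ0 hπω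
    by_cases hω : ω ∈ A i
    · simp only [hW, Set.indicator_apply, hω, if_true]
      rw [abs_div, abs_one, abs_of_pos hπpos]
      exact one_div_le_one_div_of_le hσ0 hπω
    · simp [hW, Set.indicator_apply, hω, hσ0.le, one_div_nonneg]
  -- main induction
  have key : ∀ n k, k + n = m →
      ∫ ω, (∏ i ∈ Finset.univ.filter (fun i : Fin m => k ≤ (i : ℕ)), W i ω) * g ω ∂μ
        = ∫ ω, g ω ∂μ := by
    intro n
    induction n with
    | zero =>
      intro k hk
      have hempty : Finset.univ.filter (fun i : Fin m => k ≤ (i : ℕ)) = ∅ := by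
        ext i
        simp only [Finset.mem_filter, Finset.mem_univ, true_and, Finset.notMem_empty,
          iff_false, not_le]
        have := i.isLt; omega
      simp only [hempty, Finset.prod_empty, one_mul]
    | succ n ih =>
      intro k hk
      have hkm : k < m := by omega
      set k' : Fin m := ⟨k, hkm⟩ with hk'
      set s : Finset (Fin m) := Finset.univ.filter (fun i : Fin m => k + 1 ≤ (i : ℕ)) with hs
      have hsplit : Finset.univ.filter (fun i : Fin m => k ≤ (i : ℕ)) = insert k' s := by
        ext i
        simp only [hs, Finset.mem_filter, Finset.mem_univ, true_and, Finset.mem_insert,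
          hk', Fin.ext_iff]
        omega
      have hnot : k' ∉ s := by simp [hs, hk']
      set T : Ω → ℝ := fun ω => ∏ i ∈ s, W i ω with hT
      have hTmeas : Measurable[H k'] T := by
        refine Finset.measurable_prod s (fun i hi => ?_)
        have hlt : k' < i := by
          have := (Finset.mem_filter.mp hi).2
          exact Fin.mk_lt_of_lt_val (by simpa using this)
        exact (measurable_const.indicator (hAmeas k' i hlt)).div (hπmeas k' i hlt)
      have hg'meas : Measurable[H k'] (fun ω => T ω * g ω) := hTmeas.mul (hgmeasH k')
      have hcard : s.card ≤ m := by
        calc s.card ≤ Finset.univ.card := Finset.card_filter_le _ _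
          _ = m := by simp
      have hg'bd : ∀ᵐ ω ∂μ, |T ω * g ω| ≤ (1 / σ) ^ m * (|C| * 2) := by
        filter_upwards [hball, hgbd] with ω hπω hgω
        have hTbd : |T ω| ≤ (1 / σ) ^ m := by
          calc |T ω| = ∏ i ∈ s, |W i ω| := by rw [hT]; exact Finset.abs_prod ..
            _ ≤ ∏ _i ∈ s, (1 / σ) :=
              Finset.prod_le_prod (fun i _ => abs_nonneg _) (fun i _ => hWbd i ω (hπω i))
            _ = (1 / σ) ^ s.card := Finset.prod_const _
            _ ≤ (1 / σ) ^ m := pow_le_pow_right₀ hinvσ hcard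
        calc |T ω * g ω| = |T ω| * |g ω| := abs_mul _ _
          _ ≤ (1 / σ) ^ m * (|C| * 2) :=
            mul_le_mul hTbd hgω (abs_nonneg _) (by positivity)
      have hre : ∀ ω, (∏ i ∈ Finset.univ.filter (fun i : Fin m => k ≤ (i : ℕ)), W i ω) * g ω
          = ((A k').indicator (fun _ => (1 : ℝ)) ω / π k' ω) * (T ω * g ω) := by
        intro ω
        rw [hsplit, Finset.prod_insert hnot, mul_assoc]
      calc ∫ ω, (∏ i ∈ Finset.univ.filter (fun i : Fin m => k ≤ (i : ℕ)), W i ω) * g ω ∂μ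
          = ∫ ω, ((A k').indicator (fun _ => (1 : ℝ)) ω / π k' ω) * (T ω * g ω) ∂μ :=
            integral_congr_ae (Filter.Eventually.of_forall hre)
        _ = ∫ ω, T ω * g ω ∂μ :=
            peel_one (m0 := m0) μ (H k') (hH k') (A k') (hA k') (π k') (hπ k') σ hσ0 (hbound k')
              (fun ω => T ω * g ω) hg'meas ((1 / σ) ^ m * (|C| * 2)) hg'bd
        _ = ∫ ω, g ω ∂μ := ih (k + 1) (by omega)
  have hmain := key m 0 (by omega)
  have huniv : Finset.univ.filter (fun i : Fin m => 0 ≤ (i : ℕ)) = Finset.univ := by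
    ext i; simp
  rw [huniv] at hmain
  -- now show ∫ g = 0
  have hfm0 : Measurable[m0] f := hfmeas.mono hG le_rfl
  have hindBint : Integrable indB μ :=
    (integrable_const (1 : ℝ)).indicator hB
  have hindBm : Measurable[m0] indB := measurable_const.indicator hB
  have hf1Bint : Integrable (f * indB) μ := by
    refine Integrable.mono' (integrable_const |C|) ((hfm0.mul hindBm).aestronglyMeasurable) ?_
    refine Filter.Eventually.of_forall (fun ω => ?_)
    calc |(f * indB) ω| = |f ω| * |indB ω| := abs_mul _ _
      _ ≤ |C| * 1 := mul_le_mul ((hfbd ω).trans (le_abs_self C)) (hindBbd ω)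
          (abs_nonneg _) (abs_nonneg _)
      _ = |C| := mul_one _
  have hfcint : Integrable (fun ω => f ω * c ω) μ := by
    refine Integrable.mono'
      (integrable_const |C|)
      ((hfm0.mul (hcmeasG.mono hG le_rfl)).aestronglyMeasurable) ?_
    filter_upwards [hcbd] with ω hcω
    calc |f ω * c ω| = |f ω| * |c ω| := abs_mul _ _
      _ ≤ |C| * 1 := mul_le_mul ((hfbd ω).trans (le_abs_self C)) hcω
          (abs_nonneg _) (abs_nonneg _)
      _ = |C| := mul_one _
  have hpull : μ[f * indB | G] =ᵐ[μ] f * μ[indB | G] :=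
    condExp_mul_of_stronglyMeasurable_left hfmeas.stronglyMeasurable hf1Bint hindBint
  have hfc_eq : ∫ ω, f ω * c ω ∂μ = ∫ ω, f ω * indB ω ∂μ := by
    calc ∫ ω, f ω * c ω ∂μ = ∫ ω, (μ[f * indB | G]) ω ∂μ :=
          (integral_congr_ae hpull).symm
      _ = ∫ ω, (f * indB) ω ∂μ := integral_condExp hG
      _ = ∫ ω, f ω * indB ω ∂μ := rfl
  have hgint : ∫ ω, g ω ∂μ = 0 := by
    have hsplit2 : ∀ ω, g ω = f ω * indB ω - f ω * c ω := by
      intro ω; rw [hg]; ring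
    calc ∫ ω, g ω ∂μ = ∫ ω, (f ω * indB ω - f ω * c ω) ∂μ :=
          integral_congr_ae (Filter.Eventually.of_forall hsplit2)
      _ = ∫ ω, f ω * indB ω ∂μ - ∫ ω, f ω * c ω ∂μ := integral_sub hf1Bint hfcint
      _ = 0 := by rw [hfc_eq]; ring
  exact hmain.trans hgint
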